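/- In the gauge setup, suppose additionally that 𝒥 is a fundamental symmetry on H commuting with π(a) and π'(β) for all a ∈ A, β ∈ Aᵐᵒᵖ. Let u ∈ A be unitary and ρ(u) := π(u) π'(op(u*)). If the family A = ((a_j, b_j))_{j ∈ s} is normalized, then the Krein action is gauge invariant: for every ψ ∈ H, ⟨𝒥(ρ(u)ψ), D_{u·A}(ρ(u)ψ)⟩ = ⟨𝒥ψ, D_A ψ⟩, where u·A := ((u a_j, b_j u*))_{j ∈ s}. -/

import Mathlib

open MulOpposite

variable {A : Type*} [Ring A] [Algebra ℂ A] [StarRing A]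
variable {H : Type*} [NormedAddCommGroup H] [InnerProductSpace ℂ H] [CompleteSpace H]

/-- The inner perturbation `η_D(A)` associated to a finite family `A = ((aⱼ, bⱼ))ⱼ`. -/
noncomputable def eta (π : A →⋆ₐ[ℂ] (H →L[ℂ] H)) (π' : Aᵐᵒᵖ →⋆ₐ[ℂ] (H →L[ℂ] H))
    (D : H →L[ℂ] H) {ι : Type*} [Fintype ι] (a b : ι → A) : H →L[ℂ] H :=
  ∑ j : ι, ∑ k : ι,
    π (a j) * π' (op (star (a k))) *
      (D * (π (b j) * π' (op (star (b k)))) - π (b j) * π' (op (star (b k))) * D)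

/-- The fluctuated operator `D_A = D + η_D(A)`. -/
noncomputable def fluct (π : A →⋆ₐ[ℂ] (H →L[ℂ] H)) (π' : Aᵐᵒᵖ →⋆ₐ[ℂ] (H →L[ℂ] H))
    (D : H →L[ℂ] H) {ι : Type*} [Fintype ι] (a b : ι → A) : H →L[ℂ] H :=
  D + eta π π' D a b

/-- In the gauge setup, let `𝒥` be a fundamental symmetry commuting with the commuting
star-representations `π` and `π'`, let `u ∈ A` be unitary and `ρ(u) = π(u) π'(op u*)`.
If the family `A = ((aⱼ, bⱼ))ⱼ` is normalized, then the Krein action is gauge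
invariant: `⟪𝒥(ρ(u)ψ), D_{u·A}(ρ(u)ψ)⟫ = ⟪𝒥ψ, D_A ψ⟫` for every `ψ ∈ H`, where
`u·A := ((u aⱼ, bⱼ u*))ⱼ`. -/
theorem krein_action_gauge_invariant
    (π : A →⋆ₐ[ℂ] (H →L[ℂ] H)) (π' : Aᵐᵒᵖ →⋆ₐ[ℂ] (H →L[ℂ] H))
    (hcomm : ∀ (x : A) (β : Aᵐᵒᵖ), π x * π' β = π' β * π x)
    (J : H →L[ℂ] H) (hJsa : IsSelfAdjoint J) (hJ2 : J * J = 1)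
    (hJπ : ∀ x : A, J * π x = π x * J)
    (hJπ' : ∀ β : Aᵐᵒᵖ, J * π' β = π' β * J)
    (D : H →L[ℂ] H) {ι : Type*} [Fintype ι] (a b : ι → A)
    (hnorm : ∑ j : ι, a j * b j = 1)
    (u : A) (hu₁ : star u * u = 1) (hu₂ : u * star u = 1) :
    ∀ ψ : H,
      (inner ℂ (J ((π u * π' (op (star u))) ψ))
             ((fluct π π' D (fun j => u * a j) (fun j => b j * star u))
               ((π u * π' (op (star u))) ψ)) : ℂ)
      = inner ℂ (J ψ) ((fluct π π' D a b) ψ) := by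
  -- key reordering lemma
  have key : ∀ (x y : A) (β γ : Aᵐᵒᵖ),
      (π x * π' β) * (π y * π' γ) = π (x * y) * π' (β * γ) := by
    intro x y β γ
    rw [map_mul, map_mul, mul_assoc, ← mul_assoc (π' β), ← hcomm, mul_assoc, ← mul_assoc,
      ← mul_assoc]
  set ρ : H →L[ℂ] H := π u * π' (op (star u)) with hρdef
  set ρ' : H →L[ℂ] H := π (star u) * π' (op u) with hρ'def
  have hρρ' : ρ * ρ' = 1 := by
    rw [hρdef, hρ'def, key, hu₂, ← op_mul, hu₂, op_one, map_one, map_one, one_mul]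
  have hρ'ρ : ρ' * ρ = 1 := by
    rw [hρdef, hρ'def, key, hu₁, ← op_mul, hu₁, op_one, map_one, map_one, one_mul]
  -- abbreviations
  set P : ι → ι → (H →L[ℂ] H) := fun j k => π (a j) * π' (op (star (a k))) with hP
  set Q : ι → ι → (H →L[ℂ] H) := fun j k => π (b j) * π' (op (star (b k))) with hQ
  -- prefactor identities
  have hpre : ∀ j k : ι,
      π (u * a j) * π' (op (star (u * a k))) = ρ * P j k := by
    intro j k
    rw [hρdef, hP, key]
    congr 1
    rw [star_mul, ← op_mul]
  have hpost : ∀ j k : ι,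
      π (b j * star u) * π' (op (star (b k * star u))) = Q j k * ρ' := by
    intro j k
    rw [hρ'def, hQ, key]
    congr 1
    rw [star_mul, star_star, ← op_mul]
  -- normalization gives ∑∑ P*Q = 1
  have hS : (∑ j : ι, ∑ k : ι, P j k * Q j k) = 1 := by
    have h1 : ∀ j k : ι, P j k * Q j k = π (a j * b j) * π' (op (star (a k * b k))) := by
      intro j k
      rw [hP, hQ, key]
      congr 1
      rw [star_mul, ← op_mul]
    simp only [h1]
    rw [← Finset.sum_mul_sum]
    rw [← map_sum, ← map_sum, hnorm]
    have : (∑ k : ι, op (star (a k * b k))) = 1 := by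
      rw [← Finset.op_sum, ← star_sum, hnorm, star_one, op_one]
    rw [this, map_one, map_one, one_mul]
  -- the gauge transformed fluctuation
  have hfluct : fluct π π' D (fun j => u * a j) (fun j => b j * star u)
      = ρ * fluct π π' D a b * ρ' := by
    have hterm : ∀ j k : ι,
        π (u * a j) * π' (op (star (u * a k))) *
          (D * (π (b j * star u) * π' (op (star (b k * star u)))) -
            π (b j * star u) * π' (op (star (b k * star u))) * D)
        = ρ * (P j k * (D * Q j k - Q j k * D)) * ρ'
          + (ρ * (P j k * Q j k) * D * ρ' - ρ * (P j k * Q j k) * ρ' * D) := by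
      intro j k
      rw [hpre, hpost]
      noncomm_ring
    rw [fluct, fluct, eta]
    simp only [hterm]
    simp only [Finset.sum_add_distrib, Finset.sum_sub_distrib]
    have e1 : (∑ j : ι, ∑ k : ι, ρ * (P j k * (D * Q j k - Q j k * D)) * ρ')
        = ρ * eta π π' D a b * ρ' := by
      rw [eta]
      simp only [Finset.mul_sum, Finset.sum_mul]
      rfl
    have e2 : (∑ j : ι, ∑ k : ι, ρ * (P j k * Q j k) * D * ρ') = ρ * D * ρ' := by
      have : (∑ j : ι, ∑ k : ι, ρ * (P j k * Q j k) * D * ρ')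
          = ρ * (∑ j : ι, ∑ k : ι, P j k * Q j k) * D * ρ' := by
        simp only [Finset.mul_sum, Finset.sum_mul]
      rw [this, hS, mul_one]
    have e3 : (∑ j : ι, ∑ k : ι, ρ * (P j k * Q j k) * ρ' * D) = D := by
      have : (∑ j : ι, ∑ k : ι, ρ * (P j k * Q j k) * ρ' * D)
          = ρ * (∑ j : ι, ∑ k : ι, P j k * Q j k) * ρ' * D := by
        simp only [Finset.mul_sum, Finset.sum_mul]
      rw [this, hS, mul_one, hρρ', one_mul]
    rw [e1, e2, e3]
    rw [mul_add, add_mul]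
    abel
  -- J commutes with ρ
  have hJρ : J * ρ = ρ * J := by
    rw [hρdef, ← mul_assoc, hJπ, mul_assoc, hJπ', ← mul_assoc]
  -- adjoint of ρ is ρ'
  have hadj : ContinuousLinearMap.adjoint ρ = ρ' := by
    rw [← ContinuousLinearMap.star_eq_adjoint, hρdef, hρ'def, star_mul,
      ← map_star, ← map_star, ← op_star, star_star, ← hcomm]
  intro ψ
  rw [hfluct]
  have h1 : (ρ * fluct π π' D a b * ρ') (ρ ψ) = ρ ((fluct π π' D a b) ψ) := by
    have : ρ' (ρ ψ) = ψ := by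
      rw [← ContinuousLinearMap.mul_apply, hρ'ρ, ContinuousLinearMap.one_apply]
    simp only [ContinuousLinearMap.mul_apply, this]
  have h2 : J (ρ ψ) = ρ (J ψ) := by
    rw [← ContinuousLinearMap.mul_apply, hJρ, ContinuousLinearMap.mul_apply]
  rw [h1, h2]
  have hρadj : ContinuousLinearMap.adjoint ρ' = ρ := by
    rw [← hadj, ContinuousLinearMap.adjoint_adjoint]
  set z := (fluct π π' D a b) ψ
  calc (inner ℂ (ρ (J ψ)) (ρ z) : ℂ)
      = inner ℂ ((ContinuousLinearMap.adjoint ρ') (J ψ)) (ρ z) := by rw [hρadj]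
    _ = inner ℂ (J ψ) (ρ' (ρ z)) := ContinuousLinearMap.adjoint_inner_left ρ' (ρ z) (J ψ)
    _ = inner ℂ (J ψ) z := by
        rw [← ContinuousLinearMap.mul_apply, hρ'ρ, ContinuousLinearMap.one_apply]
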